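/- Let n ≥ 2, l > 0, and let f₁, …, f_{n−1} : [−l, l] → ℝ be C¹ functions satisfying −2·Σᵢ fᵢ′(t) − (Σᵢ fᵢ(t))² − Σᵢ fᵢ(t)² ≥ n(n−1) for all t ∈ [−l, l]. Then 2l < 2π/n. -/

import Mathlib

/-- Width bound for 𝕋ⁿ⁻¹-invariant metrics on torical bands: if the logarithmic
derivatives fᵢ satisfy the scalar curvature inequality
`-2 Σ fᵢ' - (Σ fᵢ)² - Σ fᵢ² ≥ n(n-1)` on `[-l, l]`, then `2l < 2π/n`. -/
theorem torus_invariant_band_width (n : ℕ) (hn : 2 ≤ n) (l : ℝ) (hl : 0 < l)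
    (f f' : Fin (n - 1) → ℝ → ℝ)
    (hderiv : ∀ i, ∀ t ∈ Set.Icc (-l) l, HasDerivAt (f i) (f' i t) t)
    (hcont : ∀ i, ContinuousOn (f' i) (Set.Icc (-l) l))
    (hsc : ∀ t ∈ Set.Icc (-l) l,
      (n : ℝ) * ((n : ℝ) - 1) ≤
        -2 * ∑ i, f' i t - (∑ i, f i t) ^ 2 - ∑ i, (f i t) ^ 2) :
    2 * l < 2 * Real.pi / n := by
  set c : ℝ := (n : ℝ) - 1 with hcdef
  have hc : (0 : ℝ) < c := by
    have : (2 : ℝ) ≤ (n : ℝ) := by exact_mod_cast hn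
    linarith
  set F : ℝ → ℝ := fun t => ∑ i, f i t with hFdef
  set F' : ℝ → ℝ := fun t => ∑ i, f' i t with hF'def
  have hF : ∀ t ∈ Set.Icc (-l) l, HasDerivAt F (F' t) t := fun t ht =>
    HasDerivAt.fun_sum fun i _ => hderiv i t ht
  -- Cauchy–Schwarz
  have hcard : ((Finset.univ : Finset (Fin (n - 1))).card : ℝ) = c := by
    simp [hcdef]
    have : ((n - 1 : ℕ) : ℝ) = (n : ℝ) - 1 := by
      have := Nat.cast_sub (le_trans (by norm_num) hn) (R := ℝ) (m := 1) (n := n)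
      simpa using this
    simpa using this
  have hCS : ∀ t, (F t) ^ 2 ≤ c * ∑ i, (f i t) ^ 2 := by
    intro t
    have := sq_sum_le_card_mul_sum_sq (s := (Finset.univ : Finset (Fin (n - 1))))
      (f := fun i => f i t)
    calc (F t) ^ 2 ≤ ((Finset.univ : Finset (Fin (n - 1))).card : ℝ) * ∑ i, (f i t) ^ 2 :=
          this
      _ = c * ∑ i, (f i t) ^ 2 := by rw [hcard]
  have hFeq : ∀ t, F t = ∑ i, f i t := fun _ => rfl
  have hF'eq : ∀ t, F' t = ∑ i, f' i t := fun _ => rfl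
  clear_value c F F'
  -- the Riccati-type bound
  have hric : ∀ t ∈ Set.Icc (-l) l, 2 * F' t * c + (n : ℝ) * (c ^ 2 + (F t) ^ 2) ≤ 0 := by
    intro t ht
    have h1 := hsc t ht
    rw [← hFeq t, ← hF'eq t] at h1
    have h2 := hCS t
    have hn0 : (0 : ℝ) < (n : ℝ) := by positivity
    nlinarith [sq_nonneg (F t), hc, hn0]
  set G : ℝ → ℝ := fun t => Real.arctan (F t / c) + ((n : ℝ) / 2) * t with hGdef
  have hG : ∀ t ∈ Set.Icc (-l) l,
      HasDerivAt G (1 / (1 + (F t / c) ^ 2) * (F' t / c) + (n : ℝ) / 2) t := by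
    intro t ht
    have h1 : HasDerivAt (fun s => Real.arctan (F s / c))
        (1 / (1 + (F t / c) ^ 2) * (F' t / c)) t := by
      have := (Real.hasDerivAt_arctan (F t / c)).comp t (((hF t ht).div_const c))
      exact this
    have h3 := h1.add ((hasDerivAt_id t).const_mul ((n : ℝ) / 2)); rw [mul_one] at h3; exact h3
  have hkey : ∀ t ∈ Set.Icc (-l) l,
      1 / (1 + (F t / c) ^ 2) * (F' t / c) + (n : ℝ) / 2 ≤ 0 := by
    intro t ht
    have h2 := hric t ht
    have hpos : (0 : ℝ) < c ^ 2 + (F t) ^ 2 := by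
      have := sq_nonneg (F t); nlinarith
    have expand : 1 / (1 + (F t / c) ^ 2) * (F' t / c) = F' t * c / (c ^ 2 + (F t) ^ 2) := by
      field_simp
    rw [expand]
    have : F' t * c / (c ^ 2 + (F t) ^ 2) ≤ -((n : ℝ) / 2) := by
      rw [div_le_iff₀ hpos]
      have hh : (n : ℝ) * (c ^ 2 + (F t) ^ 2) = 2 * (((n : ℝ) / 2) * (c ^ 2 + (F t) ^ 2)) := by
        ring
      linarith
    linarith
  have hanti : AntitoneOn G (Set.Icc (-l) l) := by
    apply antitoneOn_of_deriv_nonpos (convex_Icc _ _)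
    · exact fun t ht => ((hG t ht).continuousAt).continuousWithinAt
    · intro x hx
      rw [interior_Icc] at hx
      exact ((hG x (Set.Ioo_subset_Icc_self hx)).differentiableAt).differentiableWithinAt
    · intro x hx
      rw [interior_Icc] at hx
      rw [(hG x (Set.Ioo_subset_Icc_self hx)).deriv]
      exact hkey x (Set.Ioo_subset_Icc_self hx)
  have hmem1 : -l ∈ Set.Icc (-l) l := by constructor <;> linarith
  have hmem2 : l ∈ Set.Icc (-l) l := by constructor <;> linarith
  have hGle : G l ≤ G (-l) := hanti hmem1 hmem2 (by linarith)
  have ha1 : Real.arctan (F (-l) / c) < Real.pi / 2 := Real.arctan_lt_pi_div_two _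
  have ha2 : -(Real.pi / 2) < Real.arctan (F l / c) := Real.neg_pi_div_two_lt_arctan _
  have hGl : G l = Real.arctan (F l / c) + ((n : ℝ) / 2) * l := rfl
  have hGml : G (-l) = Real.arctan (F (-l) / c) + ((n : ℝ) / 2) * (-l) := rfl
  have hnl : (n : ℝ) * l < Real.pi := by
    rw [hGl, hGml] at hGle
    nlinarith
  have hn0 : (0 : ℝ) < (n : ℝ) := by positivity
  rw [lt_div_iff₀ hn0]
  nlinarith
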